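/- arXiv:2210.00726 — 2 statements merged into one kernel-verified Lean document; each statement's English description precedes it below -/
import Mathlib

section
/- Let p and q be probability distributions on a finite product space, with q strictly positive, and suppose q satisfies approximate tensorization of entropy with constant C_{AT}: D_KL(p,q) ≤ C_{AT} Σ_i E_{X∼p}[ D_KL(p(X_i|X_{∼i}), q(X_i|X_{∼i})) ] for all p. Then D_KL(p,q) ≤ C_{AT} (L_p(p) − L_p(q)), where L_p is the pseudolikelihood objective L_p(q) = Σ_i E_{X∼p}[log q(X_i | X_{∼i})]. -/
open Finset

noncomputable section

variable {d : ℕ} {Ω : Fin d → Type*} [∀ i, Fintype (Ω i)] [∀ i, DecidableEq (Ω i)]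

/-- Conditional probability `p(x_i | x_{∼i})` of the `i`-th coordinate given the rest. -/
def condProb (p : (∀ i, Ω i) → ℝ) (i : Fin d) (x : ∀ i, Ω i) : ℝ :=
  p x / ∑ y : Ω i, p (Function.update x i y)

/-- Pseudolikelihood objective `L_p(q) = Σ_i E_{X∼p}[log q(X_i | X_{∼i})]`. -/
def pseudoLik (p q : (∀ i, Ω i) → ℝ) : ℝ :=
  ∑ i : Fin d, ∑ x : ∀ i, Ω i, p x * Real.log (condProb q i x)

/-- `E_{X∼p}[ D_KL( p(X_i|X_{∼i}) , q(X_i|X_{∼i}) ) ]`. -/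
def expCondKL (p q : (∀ i, Ω i) → ℝ) (i : Fin d) : ℝ :=
  ∑ x : ∀ i, Ω i, p x * ∑ y : Ω i,
    condProb p i (Function.update x i y) *
      Real.log (condProb p i (Function.update x i y) / condProb q i (Function.update x i y))

/-- Discrete KL divergence `D_KL(p,q) = Σ_x p(x) log(p(x)/q(x))`. -/
def KLdiv (p q : (∀ i, Ω i) → ℝ) : ℝ :=
  ∑ x : ∀ i, Ω i, p x * Real.log (p x / q x)

set_option linter.unusedSectionVars false in
private lemma sum_update_trick' (p G : (∀ i, Ω i) → ℝ) (i : Fin d) :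
    ∑ x : ∀ i, Ω i, ∑ y : Ω i, p x * G (Function.update x i y)
      = ∑ z : ∀ i, Ω i, (∑ y : Ω i, p (Function.update z i y)) * G z := by
  have h2 : (∑ z : ∀ i, Ω i, (∑ y : Ω i, p (Function.update z i y)) * G z)
      = ∑ zy : (∀ i, Ω i) × Ω i, p (Function.update zy.1 i zy.2) * G zy.1 := by
    rw [Fintype.sum_prod_type]
    simp [Finset.sum_mul]
  have h1 : (∑ x : ∀ i, Ω i, ∑ y : Ω i, p x * G (Function.update x i y))
      = ∑ xy : (∀ i, Ω i) × Ω i, p xy.1 * G (Function.update xy.1 i xy.2) := by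
    rw [Fintype.sum_prod_type]
  rw [h1, h2]
  refine Fintype.sum_equiv
    ⟨fun xy => (Function.update xy.1 i xy.2, xy.1 i),
     fun zy => (Function.update zy.1 i zy.2, zy.1 i), ?_, ?_⟩ _ _ ?_
  · rintro ⟨x, y⟩
    simp [Function.update_idem]
  · rintro ⟨z, y⟩
    simp [Function.update_idem]
  · rintro ⟨x, y⟩
    simp [Function.update_idem]

private lemma expCondKL_eq' (p q : (∀ i, Ω i) → ℝ) (i : Fin d)
    (hpmarg : ∀ x : ∀ i, Ω i, 0 < ∑ y : Ω i, p (Function.update x i y)) :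
    expCondKL p q i
    = ∑ x : ∀ i, Ω i, p x * Real.log (condProb p i x / condProb q i x) := by
  unfold expCondKL
  have := sum_update_trick' p
    (fun z => condProb p i z * Real.log (condProb p i z / condProb q i z)) i
  simp only [Finset.mul_sum] at *
  rw [this]
  refine Finset.sum_congr rfl fun z _ => ?_
  have hS := hpmarg z
  rw [condProb]
  field_simp

/-- If `q > 0` satisfies approximate tensorization of entropy with constant `C_AT`:
`D_KL(p,q) ≤ C_AT Σ_i E_{X∼p}[D_KL(p(X_i|X_{∼i}), q(X_i|X_{∼i}))]` for all `p`, then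
`D_KL(p,q) ≤ C_AT (L_p(p) − L_p(q))` for the pseudolikelihood objective `L_p`. -/
theorem approx_tensorization_implies_pseudolikelihood_bound
    (q : (∀ i, Ω i) → ℝ) (hq0 : ∀ x, 0 < q x) (hq1 : ∑ x : ∀ i, Ω i, q x = 1)
    (C_AT : ℝ)
    (hAT : ∀ p : (∀ i, Ω i) → ℝ, (∀ x, 0 ≤ p x) → (∑ x : ∀ i, Ω i, p x = 1) →
      (∀ (i : Fin d) (x : ∀ i, Ω i), 0 < ∑ y : Ω i, p (Function.update x i y)) →
      KLdiv p q ≤ C_AT * ∑ i : Fin d, expCondKL p q i)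
    (p : (∀ i, Ω i) → ℝ) (hp0 : ∀ x, 0 ≤ p x) (hp1 : ∑ x : ∀ i, Ω i, p x = 1)
    (hpmarg : ∀ (i : Fin d) (x : ∀ i, Ω i), 0 < ∑ y : Ω i, p (Function.update x i y)) :
    KLdiv p q ≤ C_AT * (pseudoLik p p - pseudoLik p q) := by
  have key : (∑ i : Fin d, expCondKL p q i) = pseudoLik p p - pseudoLik p q := by
    unfold pseudoLik
    rw [← Finset.sum_sub_distrib]
    refine Finset.sum_congr rfl fun i _ => ?_
    rw [expCondKL_eq' p q i (hpmarg i), ← Finset.sum_sub_distrib]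
    refine Finset.sum_congr rfl fun x _ => ?_
    rcases eq_or_lt_of_le (hp0 x) with h0 | hpx
    · simp [← h0]
    · have hπp : 0 < condProb p i x := div_pos hpx (hpmarg i x)
      have hπq : 0 < condProb q i x :=
        div_pos (hq0 x) (Finset.sum_pos (fun y _ => hq0 _) ⟨x i, Finset.mem_univ _⟩)
      rw [Real.log_div hπp.ne' hπq.ne', mul_sub]
  rw [← key]
  exact hAT p hp0 hp1 hpmarg

end
end

section
/- For the one-dimensional potential F_1(x) = −(1/(8a²))(x−a)²(x+a)² with a > 1 and the density p(x) ∝ e^{F_1(x)}, there is a constant C' > 0 independent of a such that Pr_{X∼p}(X ∈ [a−1, a+1]) ≥ C'. -/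
open MeasureTheory Real

noncomputable section

def bimodalPot (a x : ℝ) : ℝ := -(1 / (8 * a ^ 2)) * (x - a) ^ 2 * (x + a) ^ 2

lemma gauss_int (a : ℝ) : ∫ x : ℝ, Real.exp (-(1/8) * (x - a)^2) = Real.sqrt (8 * π) := by
  rw [integral_sub_right_eq_self (fun x => Real.exp (-(1/8) * x^2)) a,
    integral_gaussian, show π / (1/8 : ℝ) = 8 * π by ring]

lemma gauss_int' (a : ℝ) : ∫ x : ℝ, Real.exp (-(1/8) * (x + a)^2) = Real.sqrt (8 * π) := by
  have := gauss_int (-a); simpa [sub_neg_eq_add] using this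

lemma pot_le (a x : ℝ) (ha : 1 < a) :
    Real.exp (bimodalPot a x) ≤ Real.exp (-(1/8) * (x - a)^2) + Real.exp (-(1/8) * (x + a)^2) := by
  have h8 : (0:ℝ) < 8 * a ^ 2 := by positivity
  rcases le_or_gt 0 x with hx | hx
  · have key : a^2 * (x-a)^2 ≤ (x-a)^2 * (x+a)^2 := by
      nlinarith [sq_nonneg (x - a), mul_nonneg hx (by linarith : (0:ℝ) ≤ x + 2*a)]
    have h : bimodalPot a x ≤ -(1/8) * (x - a)^2 := by
      have e1 : bimodalPot a x = -((x-a)^2 * (x+a)^2) / (8 * a^2) := by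
        rw [bimodalPot]; ring
      have e2 : -(1/8) * (x - a)^2 = -(a^2 * (x-a)^2) / (8 * a^2) := by
        field_simp
      rw [e1, e2]
      exact (div_le_div_iff_of_pos_right h8).2 (by linarith)
    calc Real.exp (bimodalPot a x) ≤ Real.exp (-(1/8) * (x - a)^2) := Real.exp_le_exp.2 h
      _ ≤ _ := le_add_of_nonneg_right (Real.exp_pos _).le
  · have key : a^2 * (x+a)^2 ≤ (x-a)^2 * (x+a)^2 := by
      nlinarith [sq_nonneg (x + a), mul_nonneg (neg_nonneg.2 hx.le) (by linarith : (0:ℝ) ≤ 2*a - x)]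
    have h : bimodalPot a x ≤ -(1/8) * (x + a)^2 := by
      have e1 : bimodalPot a x = -((x-a)^2 * (x+a)^2) / (8 * a^2) := by
        rw [bimodalPot]; ring
      have e2 : -(1/8) * (x + a)^2 = -(a^2 * (x+a)^2) / (8 * a^2) := by
        field_simp
      rw [e1, e2]
      exact (div_le_div_iff_of_pos_right h8).2 (by linarith)
    calc Real.exp (bimodalPot a x) ≤ Real.exp (-(1/8) * (x + a)^2) := Real.exp_le_exp.2 h
      _ ≤ _ := le_add_of_nonneg_left (Real.exp_pos _).le

lemma gauss_integrable (a : ℝ) : Integrable (fun x : ℝ => Real.exp (-(1/8) * (x - a)^2)) := by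
  have := (integrable_exp_neg_mul_sq (by norm_num : (0:ℝ) < 1/8)).comp_sub_right a
  simpa using this

lemma gauss_integrable' (a : ℝ) : Integrable (fun x : ℝ => Real.exp (-(1/8) * (x + a)^2)) := by
  have := gauss_integrable (-a); simpa [sub_neg_eq_add] using this

lemma pot_integrable (a : ℝ) (ha : 1 < a) :
    Integrable (fun x : ℝ => Real.exp (bimodalPot a x)) := by
  refine Integrable.mono' ((gauss_integrable a).add (gauss_integrable' a)) ?_ ?_
  · exact (Real.continuous_exp.comp (by unfold bimodalPot; continuity)).aestronglyMeasurable
  · filter_upwards with x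
    rw [Real.norm_eq_abs, abs_of_pos (Real.exp_pos _)]
    exact pot_le a x ha

/-- For the one-dimensional density `p(x) ∝ exp(F₁(x))` with
`F₁(x) = −(1/(8a²))(x−a)²(x+a)²` and `a > 1`, there is a constant `C' > 0` independent of
`a` such that `Pr_{X∼p}(X ∈ [a−1, a+1]) ≥ C'`. -/
theorem bimodal_mass_near_mode :
    ∃ C' : ℝ, 0 < C' ∧ ∀ a : ℝ, 1 < a →
      C' ≤ (∫ x in Set.Icc (a - 1) (a + 1), Real.exp (bimodalPot a x)) /
        (∫ x : ℝ, Real.exp (bimodalPot a x)) := by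
  refine ⟨(2 * Real.exp (-(9/8))) / (2 * Real.sqrt (8 * π)), by positivity, ?_⟩
  intro a ha
  have hint := pot_integrable a ha
  have hZpos : 0 < ∫ x : ℝ, Real.exp (bimodalPot a x) := integral_exp_pos hint
  have hZle : (∫ x : ℝ, Real.exp (bimodalPot a x)) ≤ 2 * Real.sqrt (8 * π) := by
    calc (∫ x : ℝ, Real.exp (bimodalPot a x))
        ≤ ∫ x : ℝ, (Real.exp (-(1/8) * (x - a)^2) + Real.exp (-(1/8) * (x + a)^2)) :=
          integral_mono hint ((gauss_integrable a).add (gauss_integrable' a))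
            (fun x => pot_le a x ha)
      _ = 2 * Real.sqrt (8 * π) := by
          rw [integral_add (gauss_integrable a) (gauss_integrable' a), gauss_int, gauss_int']
          ring
  have hNge : 2 * Real.exp (-(9/8)) ≤
      ∫ x in Set.Icc (a - 1) (a + 1), Real.exp (bimodalPot a x) := by
    have hconst : (∫ _x in Set.Icc (a - 1) (a + 1), Real.exp (-(9/8 : ℝ)))
        = 2 * Real.exp (-(9/8)) := by
      rw [setIntegral_const, measureReal_def, Real.volume_Icc,
        show a + 1 - (a - 1) = (2:ℝ) by ring]
      simp [smul_eq_mul]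
    rw [← hconst]
    have hic : IntegrableOn (fun _ => Real.exp (-(9/8:ℝ))) (Set.Icc (a-1) (a+1)) volume :=
      integrableOn_const (by rw [Real.volume_Icc]; exact ENNReal.ofReal_lt_top.ne)
    refine setIntegral_mono_on hic hint.integrableOn measurableSet_Icc ?_
    intro x hx
    apply Real.exp_le_exp.2
    obtain ⟨h1, h2⟩ := hx
    have h8 : (0:ℝ) < 8 * a ^ 2 := by positivity
    have h3 : (x-a)^2 ≤ 1 := by nlinarith [mul_nonneg (by linarith : (0:ℝ) ≤ x - (a-1)) (by linarith : (0:ℝ) ≤ a + 1 - x)]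
    have h4 : (x+a)^2 ≤ 9 * a^2 := by nlinarith [mul_nonneg (by linarith : (0:ℝ) ≤ 2*a - x) (by linarith : (0:ℝ) ≤ 4*a + x)]
    have key : (x-a)^2 * (x+a)^2 ≤ 9 * a^2 := by
      calc (x-a)^2 * (x+a)^2 ≤ 1 * (9 * a^2) :=
            mul_le_mul h3 h4 (sq_nonneg _) (by norm_num)
        _ = 9 * a^2 := by ring
    have e1 : bimodalPot a x = -((x-a)^2 * (x+a)^2) / (8 * a^2) := by
      rw [bimodalPot]; ring
    have e2 : -(9/8 : ℝ) = -(9 * a^2) / (8 * a^2) := by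
      field_simp
    rw [e1, e2]
    exact (div_le_div_iff_of_pos_right h8).2 (by linarith)
  calc (2 * Real.exp (-(9/8))) / (2 * Real.sqrt (8 * π))
      ≤ (∫ x in Set.Icc (a - 1) (a + 1), Real.exp (bimodalPot a x)) /
        (∫ x : ℝ, Real.exp (bimodalPot a x)) :=
        div_le_div₀ (le_trans (by positivity) hNge) hNge hZpos hZle

end
end
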